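/- Let G = SL_{n+1}(k) and let R = SL_n(k) embedded in G acting on the first n basis vectors, acting on G by X ↦ Xr⁻¹. Then the algebra of R-invariant regular functions on G is generated by the n+1 minors Mᵢ (obtained by deleting row i and the last column) together with the n+1 entries yᵢ of the last column. -/

import Mathlib

set_option linter.unusedSectionVars false


variable (k : Type) [Field k] [CharZero k] [IsAlgClosed k] (n : ℕ)

/-- The block-diagonal embedding `SL_n ↪ SL_{n+1}` acting on the first `n` basis
vectors. -/
def embedSL (r : Matrix.SpecialLinearGroup (Fin n) k) :
    Matrix.SpecialLinearGroup (Fin (n + 1)) k :=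
  ⟨Matrix.reindex finSumFinEquiv finSumFinEquiv
      (Matrix.fromBlocks r.1 0 0 (1 : Matrix (Fin 1) (Fin 1) k)), by
    simp [Matrix.det_fromBlocks_zero₂₁, r.2]⟩

/-- Regular functions on `SL_{n+1}`: the subalgebra of functions generated by the
matrix coordinates. -/
def regularSL : Subalgebra k (Matrix.SpecialLinearGroup (Fin (n + 1)) k → k) :=
  Algebra.adjoin k (Set.range fun p : Fin (n + 1) × Fin (n + 1) =>
    fun X : Matrix.SpecialLinearGroup (Fin (n + 1)) k => X.1 p.1 p.2)

/-- Functions invariant under the right action `X ↦ Xr⁻¹` of `SL_n` (equivalently,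
under `X ↦ Xr`). -/
def invSLn : Subalgebra k (Matrix.SpecialLinearGroup (Fin (n + 1)) k → k) where
  carrier := {φ | ∀ (r : Matrix.SpecialLinearGroup (Fin n) k) X,
    φ (X * (embedSL k n r)⁻¹) = φ X}
  mul_mem' := by intro a b ha hb r X; simp [Pi.mul_apply, ha r X, hb r X]
  add_mem' := by intro a b ha hb r X; simp [Pi.add_apply, ha r X, hb r X]
  algebraMap_mem' := by intro c r X; rfl

/-- The minor `Mᵢ` : the determinant of the submatrix obtained by deleting the `i`-th
row and the last column. -/
def minorFn (i : Fin (n + 1)) : Matrix.SpecialLinearGroup (Fin (n + 1)) k → k :=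
  fun X => (X.1.submatrix i.succAbove Fin.castSucc).det

/-- The entry `yᵢ` of the last column. -/
def lastColFn (i : Fin (n + 1)) : Matrix.SpecialLinearGroup (Fin (n + 1)) k → k :=
  fun X => X.1 i (Fin.last n)

namespace Stmt9Aux

variable {k n}

lemma embed_cc (r : Matrix.SpecialLinearGroup (Fin n) k) (a b : Fin n) :
    (embedSL k n r).1 a.castSucc b.castSucc = r.1 a b := by
  simp [embedSL, Matrix.reindex_apply, show ∀ m (a : Fin m), a.castSucc = Fin.castAdd 1 a from fun _ _ => rfl]

lemma embed_lc (r : Matrix.SpecialLinearGroup (Fin n) k) (b : Fin n) :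
    (embedSL k n r).1 (Fin.last n) b.castSucc = 0 := by
  simp [embedSL, Matrix.reindex_apply, finSumFinEquiv_symm_last, show ∀ m (a : Fin m), a.castSucc = Fin.castAdd 1 a from fun _ _ => rfl]

lemma embed_cl (r : Matrix.SpecialLinearGroup (Fin n) k) (a : Fin n) :
    (embedSL k n r).1 a.castSucc (Fin.last n) = 0 := by
  simp [embedSL, Matrix.reindex_apply, finSumFinEquiv_symm_last, show ∀ m (a : Fin m), a.castSucc = Fin.castAdd 1 a from fun _ _ => rfl]

lemma embed_ll (r : Matrix.SpecialLinearGroup (Fin n) k) :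
    (embedSL k n r).1 (Fin.last n) (Fin.last n) = 1 := by
  simp [embedSL, Matrix.reindex_apply, finSumFinEquiv_symm_last]

lemma mul_embed_castSucc (M : Matrix (Fin (n+1)) (Fin (n+1)) k)
    (r : Matrix.SpecialLinearGroup (Fin n) k) (p : Fin (n+1)) (q : Fin n) :
    (M * (embedSL k n r).1) p q.castSucc = ∑ c, M p c.castSucc * r.1 c q := by
  rw [Matrix.mul_apply, Fin.sum_univ_castSucc]
  simp [embed_cc, embed_lc]

lemma mul_embed_last (M : Matrix (Fin (n+1)) (Fin (n+1)) k)
    (r : Matrix.SpecialLinearGroup (Fin n) k) (p : Fin (n+1)) :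
    (M * (embedSL k n r).1) p (Fin.last n) = M p (Fin.last n) := by
  rw [Matrix.mul_apply, Fin.sum_univ_castSucc]; simp [embed_cl, embed_ll]

lemma embed_mul (r s : Matrix.SpecialLinearGroup (Fin n) k) :
    embedSL k n (r*s) = embedSL k n r * embedSL k n s := by
  apply Subtype.ext
  rw [Matrix.SpecialLinearGroup.coe_mul]
  simp only [embedSL, Matrix.SpecialLinearGroup.coe_mul, Matrix.reindex_apply,
    Matrix.submatrix_mul_equiv _ _ _ finSumFinEquiv.symm]
  rw [Matrix.fromBlocks_multiply]
  simp

lemma embed_one : embedSL k n 1 = 1 := by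
  ext : 1
  simp [embedSL, Matrix.reindex_apply]

lemma embed_inv (r : Matrix.SpecialLinearGroup (Fin n) k) :
    (embedSL k n r)⁻¹ = embedSL k n r⁻¹ := by
  apply inv_eq_of_mul_eq_one_right
  rw [← embed_mul, mul_inv_cancel, embed_one]

lemma coord_mem (p q : Fin (n+1)) :
    (fun X : Matrix.SpecialLinearGroup (Fin (n+1)) k => X.1 p q) ∈ regularSL k n :=
  Algebra.subset_adjoin ⟨(p, q), rfl⟩

set_option maxHeartbeats 1000000 in
lemma detSub_mem_regular (g f : Fin n → Fin (n+1)) :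
    (fun X : Matrix.SpecialLinearGroup (Fin (n+1)) k => (X.1.submatrix g f).det)
      ∈ regularSL k n := by
  have h : (fun X : Matrix.SpecialLinearGroup (Fin (n+1)) k => (X.1.submatrix g f).det)
      = ∑ σ : Equiv.Perm (Fin n), ((Equiv.Perm.sign σ : ℤ) : k) •
          ∏ i, (fun X : Matrix.SpecialLinearGroup (Fin (n+1)) k => X.1 (g (σ i)) (f i)) := by
    funext X
    rw [Matrix.det_apply', Finset.sum_apply]
    refine Finset.sum_congr rfl fun s _ => ?_
    rw [Pi.smul_apply, Finset.prod_apply]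
    simp only [Matrix.submatrix_apply, smul_eq_mul]
  rw [h]
  refine Subalgebra.sum_mem _ fun σ _ => ?_
  refine Subalgebra.smul_mem _ (Subalgebra.prod_mem _ fun i _ => coord_mem _ _) _

lemma submatrix_mul_embed (X : Matrix.SpecialLinearGroup (Fin (n+1)) k)
    (r : Matrix.SpecialLinearGroup (Fin n) k) (f : Fin n → Fin (n+1)) :
    ((X * embedSL k n r).1).submatrix f Fin.castSucc
      = (X.1.submatrix f Fin.castSucc) * r.1 := by
  ext a b
  rw [Matrix.submatrix_apply, Matrix.SpecialLinearGroup.coe_mul, mul_embed_castSucc,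
    Matrix.mul_apply]
  rfl

lemma minor_mul_embed (X : Matrix.SpecialLinearGroup (Fin (n+1)) k)
    (r : Matrix.SpecialLinearGroup (Fin n) k) (i : Fin (n+1)) :
    (minorFn k n i : _) (X * embedSL k n r) = minorFn k n i X := by
  show ((X * embedSL k n r).1.submatrix i.succAbove Fin.castSucc).det = _
  rw [submatrix_mul_embed, Matrix.det_mul, r.2, mul_one]
  rfl

lemma lastCol_mul_embed (X : Matrix.SpecialLinearGroup (Fin (n+1)) k)
    (r : Matrix.SpecialLinearGroup (Fin n) k) (i : Fin (n+1)) :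
    (lastColFn k n i : _) (X * embedSL k n r) = lastColFn k n i X := by
  show (X * embedSL k n r).1 i (Fin.last n) = _
  rw [Matrix.SpecialLinearGroup.coe_mul, mul_embed_last]
  rfl

lemma minor_mem_inv (i : Fin (n+1)) : (minorFn k n i : _) ∈ invSLn k n :=
  fun r X => by rw [embed_inv]; exact minor_mul_embed X r⁻¹ i

lemma lastCol_mem_inv (i : Fin (n+1)) : (lastColFn k n i : _) ∈ invSLn k n :=
  fun r X => by rw [embed_inv]; exact lastCol_mul_embed X r⁻¹ i

lemma minor_mem_regular (i : Fin (n+1)) : (minorFn k n i : _) ∈ regularSL k n :=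
  detSub_mem_regular i.succAbove Fin.castSucc

lemma lastCol_mem_regular (i : Fin (n+1)) : (lastColFn k n i : _) ∈ regularSL k n :=
  coord_mem i (Fin.last n)

lemma detRow_mem_adjoin (g : Fin n → Fin (n+1)) :
    (fun X : Matrix.SpecialLinearGroup (Fin (n+1)) k => (X.1.submatrix g Fin.castSucc).det)
      ∈ Algebra.adjoin k (Set.range (minorFn k n) ∪ Set.range (lastColFn k n)) := by
  by_cases hg : Function.Injective g
  · obtain ⟨i₀, hi₀⟩ : ∃ i₀ : Fin (n+1), ∀ a, g a ≠ i₀ := by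
      by_contra hcon
      push_neg at hcon
      have hsurj : Function.Surjective g := fun y => hcon y
      have := Fintype.card_le_of_surjective g hsurj
      simp at this
    have he : ∀ a, ∃ b, i₀.succAbove b = g a := fun a => Fin.exists_succAbove_eq (hi₀ a)
    choose e' he' using he
    have hinj : Function.Injective e' := by
      intro a b hab
      apply hg
      rw [← he' a, ← he' b, hab]
    let e : Equiv.Perm (Fin n) := Equiv.ofBijective e' (Finite.injective_iff_bijective.mp hinj)
    have key : (fun X : Matrix.SpecialLinearGroup (Fin (n+1)) k =>
        (X.1.submatrix g Fin.castSucc).det)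
        = ((Equiv.Perm.sign e : ℤ) : k) • minorFn k n i₀ := by
      funext X
      have hX : X.1.submatrix g Fin.castSucc
          = ((X.1.submatrix i₀.succAbove Fin.castSucc).submatrix e id) := by
        ext a b
        simp only [Matrix.submatrix_apply, id_eq]
        rw [show (e a : Fin n) = e' a from rfl, he']
      rw [hX, Matrix.det_permute]
      simp [minorFn, smul_eq_mul]
    rw [key]
    refine Subalgebra.smul_mem _ ?_ _
    exact Algebra.subset_adjoin (Or.inl ⟨i₀, rfl⟩)
  · rw [Function.not_injective_iff] at hg
    obtain ⟨a, b, hab, hne⟩ := hg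
    have : (fun X : Matrix.SpecialLinearGroup (Fin (n+1)) k =>
        (X.1.submatrix g Fin.castSucc).det) = 0 := by
      funext X
      exact Matrix.det_zero_of_row_eq hne (by ext c; simp [Matrix.submatrix_apply, hab])
    rw [this]
    exact Subalgebra.zero_mem _

lemma prod_ite_zero (m : ℕ) (c : k) (hc : m = 0 → c = 1) :
    (∏ j : Fin m, if (j : ℕ) = 0 then c else 1) = c := by
  cases m with
  | zero => simp [hc rfl]
  | succ m =>
    rw [Finset.prod_eq_single (0 : Fin (m+1))]
    · simp
    · intro b _ hb
      rw [if_neg (fun h => hb (Fin.ext h) : ¬ ((b : ℕ) = 0))]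
    · simp

lemma exists_orbit_rep (i : Fin (n+1)) (X : Matrix.SpecialLinearGroup (Fin (n+1)) k)
    (h : minorFn k n i X ≠ 0) :
    ∃ r : Matrix.SpecialLinearGroup (Fin n) k,
      (∀ p, (X * embedSL k n r).1 p (Fin.last n) = X.1 p (Fin.last n)) ∧
      (∀ t q : Fin n, (X * embedSL k n r).1 (i.succAbove t) q.castSucc
         = if t = q then (if (q : ℕ) = 0 then minorFn k n i X else 1) else 0) ∧
      (∀ q : Fin n, minorFn k n i X * (X * embedSL k n r).1 i q.castSucc
         = (if (q : ℕ) = 0 then minorFn k n i X else 1) *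
           (X.1.submatrix (fun q' => if q' = q then i else i.succAbove q')
             Fin.castSucc).det) := by
  set B : Matrix (Fin n) (Fin n) k := X.1.submatrix i.succAbove Fin.castSucc with hB
  have hdetB : B.det = minorFn k n i X := rfl
  have hu : IsUnit B.det := isUnit_iff_ne_zero.2 (by rw [hdetB]; exact h)
  set c : Fin n → k := fun q => X.1 i q.castSucc with hc
  set d' : Fin n → k := fun j => if (j : ℕ) = 0 then B.det else 1 with hd'
  have hprod : (∏ j : Fin n, d' j) = B.det := by
    apply prod_ite_zero
    intro h0
    subst h0
    exact Matrix.det_fin_zero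
  have hdet : (B⁻¹ * Matrix.diagonal d').det = 1 := by
    rw [Matrix.det_mul, Matrix.det_nonsing_inv, Matrix.det_diagonal, hprod,
      Ring.inverse_eq_inv]
    exact inv_mul_cancel₀ (isUnit_iff_ne_zero.1 hu)
  refine ⟨⟨B⁻¹ * Matrix.diagonal d', hdet⟩, ?_, ?_, ?_⟩
  · intro p
    erw [Matrix.SpecialLinearGroup.coe_mul, mul_embed_last]
  · intro t q
    erw [Matrix.SpecialLinearGroup.coe_mul, mul_embed_castSucc]
    have : ∑ c', X.1 (i.succAbove t) c'.castSucc * (B⁻¹ * Matrix.diagonal d') c' q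
        = ((B * B⁻¹) * Matrix.diagonal d') t q := by
      rw [Matrix.mul_assoc, Matrix.mul_apply]
      rfl
    rw [this, Matrix.mul_nonsing_inv _ hu, Matrix.one_mul, Matrix.diagonal_apply, hd']
    split_ifs with h1 h2 <;> simp_all
  · intro q
    erw [Matrix.SpecialLinearGroup.coe_mul, mul_embed_castSucc]
    set w : Fin n → k := Matrix.vecMul c B⁻¹ with hwdef
    have hsum : ∑ c', X.1 i c'.castSucc * (B⁻¹ * Matrix.diagonal d') c' q
        = w q * d' q := by
      have : ∑ c', X.1 i c'.castSucc * (B⁻¹ * Matrix.diagonal d') c' q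
          = ((Matrix.of (fun (_ : Fin 1) j => c j)) * (B⁻¹ * Matrix.diagonal d')) 0 q := by
        rw [Matrix.mul_apply]
        rfl
      rw [this, ← Matrix.mul_assoc, Matrix.mul_diagonal]
      congr 1
    rw [hsum]
    have hwB : Matrix.vecMul w B = c := by
      rw [hwdef, Matrix.vecMul_vecMul, Matrix.nonsing_inv_mul _ hu, Matrix.vecMul_one]
    have hcr : (B.updateRow q c).det = w q * B.det := by
      conv_lhs => rw [← hwB]
      have : Matrix.vecMul w B = ∑ l, w l • B l := by
        funext j
        simp [Matrix.vecMul, dotProduct, Finset.sum_apply]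
      rw [this, Matrix.det_updateRow_sum, smul_eq_mul]
    have hsub : B.updateRow q c
        = X.1.submatrix (fun q' => if q' = q then i else i.succAbove q') Fin.castSucc := by
      ext q' j
      rw [Matrix.updateRow_apply]
      by_cases hq : q' = q <;> simp [Matrix.submatrix_apply, hq, hB, hc]
    rw [← hsub, hcr, hdetB]
    simp only [hd']
    simp only [hdetB]
    ring

lemma inv_apply_mul_embed {φ : Matrix.SpecialLinearGroup (Fin (n+1)) k → k}
    (hφ : φ ∈ invSLn k n) (X : Matrix.SpecialLinearGroup (Fin (n+1)) k)
    (r : Matrix.SpecialLinearGroup (Fin n) k) :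
    φ (X * embedSL k n r) = φ X := by
  have := hφ r⁻¹ X
  rwa [embed_inv, inv_inv] at this

lemma pow_mul_mem (i : Fin (n+1)) (φ : Matrix.SpecialLinearGroup (Fin (n+1)) k → k)
    (hreg : φ ∈ regularSL k n) (hinv : φ ∈ invSLn k n) :
    ∃ N : ℕ, minorFn k n i ^ N * φ ∈ Algebra.adjoin k
      (Set.range (minorFn k n) ∪ Set.range (lastColFn k n)) := by
  classical
  set A := Algebra.adjoin k
    (Set.range (minorFn k n) ∪ Set.range (lastColFn k n)) with hA
  have hmA : ∀ j, minorFn k n j ∈ A := fun j => Algebra.subset_adjoin (Or.inl ⟨j, rfl⟩)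
  have hyA : ∀ j, lastColFn k n j ∈ A := fun j => Algebra.subset_adjoin (Or.inr ⟨j, rfl⟩)
  set T : Matrix.SpecialLinearGroup (Fin (n+1)) k → Matrix.SpecialLinearGroup (Fin (n+1)) k :=
    fun X => if h : minorFn k n i X = 0 then X
      else X * embedSL k n (Classical.choose (exists_orbit_rep i X h)) with hT
  have hTX : ∀ (X : Matrix.SpecialLinearGroup (Fin (n+1)) k) (h : minorFn k n i X ≠ 0),
      T X = X * embedSL k n (Classical.choose (exists_orbit_rep i X h)) := by
    intro X h; rw [hT]; simp [h]
  have hTφ : ∀ X, φ (T X) = φ X := by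
    intro X
    by_cases h : minorFn k n i X = 0
    · rw [hT]; simp [h]
    · rw [hTX X h]
      exact inv_apply_mul_embed hinv X _
  have hentry : ∀ p q' : Fin (n+1), ∃ F ∈ A, ∀ X, ∀ _ : minorFn k n i X ≠ 0,
      minorFn k n i X * (T X).1 p q' = F X := by
    intro p q'
    induction q' using Fin.lastCases with
    | last =>
      refine ⟨minorFn k n i * lastColFn k n p, mul_mem (hmA i) (hyA p), ?_⟩
      intro X h
      rw [hTX X h, (Classical.choose_spec (exists_orbit_rep i X h)).1 p]
      rfl
    | cast q =>
      by_cases hp : p = i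
      · subst hp
        refine ⟨(if (q : ℕ) = 0 then minorFn k n p else 1) *
          (fun X : Matrix.SpecialLinearGroup (Fin (n+1)) k => ((X : Matrix _ _ k).submatrix
            (fun q' => if q' = q then p else p.succAbove q') Fin.castSucc).det),
          mul_mem (by split_ifs; exacts [hmA p, one_mem _]) (detRow_mem_adjoin _), ?_⟩
        intro X h
        rw [hTX X h, (Classical.choose_spec (exists_orbit_rep p X h)).2.2 q]
        rw [Pi.mul_apply]
        congr 1
        split_ifs <;> rfl
      · obtain ⟨t, rfl⟩ := Fin.exists_succAbove_eq hp
        refine ⟨if t = q then (if (q : ℕ) = 0 then minorFn k n i * minorFn k n i else minorFn k n i) else 0,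
          by split_ifs; exacts [mul_mem (hmA i) (hmA i), hmA i, zero_mem _], ?_⟩
        intro X h
        rw [hTX X h, (Classical.choose_spec (exists_orbit_rep i X h)).2.1 t q]
        split_ifs with h1 h2 <;> simp [Pi.mul_apply]
  have main : ∀ ψ, ψ ∈ regularSL k n → ∃ N : ℕ, ∃ F ∈ A,
      ∀ X, ∀ _ : minorFn k n i X ≠ 0, minorFn k n i X ^ N * ψ (T X) = F X := by
    intro ψ hψ
    have hψ' : ψ ∈ Algebra.adjoin k (Set.range fun p : Fin (n + 1) × Fin (n + 1) =>
      fun X : Matrix.SpecialLinearGroup (Fin (n + 1)) k => X.1 p.1 p.2) := hψ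
    clear hψ
    induction hψ' using Algebra.adjoin_induction with
    | mem x hx =>
      obtain ⟨⟨p, q'⟩, rfl⟩ := hx
      obtain ⟨F, hF, hFX⟩ := hentry p q'
      exact ⟨1, F, hF, fun X h => by rw [pow_one]; exact hFX X h⟩
    | algebraMap r =>
      refine ⟨0, algebraMap k _ r, Subalgebra.algebraMap_mem _ r, fun X h => ?_⟩
      simp
    | add x y hx hy ihx ihy =>
      obtain ⟨N1, F1, hF1, h1⟩ := ihx
      obtain ⟨N2, F2, hF2, h2⟩ := ihy
      refine ⟨N1 + N2, minorFn k n i ^ N2 * F1 + minorFn k n i ^ N1 * F2,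
        add_mem (mul_mem (pow_mem (hmA i) _) hF1) (mul_mem (pow_mem (hmA i) _) hF2),
        fun X h => ?_⟩
      have e1 := h1 X h
      have e2 := h2 X h
      simp only [Pi.add_apply, Pi.mul_apply, Pi.pow_apply]
      have : minorFn k n i X ^ (N1 + N2) * (x (T X) + y (T X))
          = minorFn k n i X ^ N2 * (minorFn k n i X ^ N1 * x (T X))
            + minorFn k n i X ^ N1 * (minorFn k n i X ^ N2 * y (T X)) := by ring
      rw [this, e1, e2]
    | mul x y hx hy ihx ihy =>
      obtain ⟨N1, F1, hF1, h1⟩ := ihx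
      obtain ⟨N2, F2, hF2, h2⟩ := ihy
      refine ⟨N1 + N2, F1 * F2, mul_mem hF1 hF2, fun X h => ?_⟩
      have e1 := h1 X h
      have e2 := h2 X h
      simp only [Pi.mul_apply]
      have : minorFn k n i X ^ (N1 + N2) * (x (T X) * y (T X))
          = (minorFn k n i X ^ N1 * x (T X)) * (minorFn k n i X ^ N2 * y (T X)) := by ring
      rw [this, e1, e2]
  obtain ⟨N, F, hF, hFX⟩ := main φ hreg
  refine ⟨N + 1, ?_⟩
  have key : minorFn k n i ^ (N+1) * φ = minorFn k n i * F := by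
    funext X
    simp only [Pi.mul_apply, Pi.pow_apply]
    by_cases h : minorFn k n i X = 0
    · rw [h]; ring
    · rw [← hTφ X]
      calc minorFn k n i X ^ (N+1) * φ (T X)
          = minorFn k n i X * (minorFn k n i X ^ N * φ (T X)) := by ring
        _ = minorFn k n i X * F X := by rw [hFX X h]
  rw [key]
  exact mul_mem (hmA i) hF

def uFn (i : Fin (n+1)) : Matrix.SpecialLinearGroup (Fin (n+1)) k → k :=
  fun X => (-1 : k)^((i:ℕ)+n) * (X.1 i (Fin.last n) * minorFn k n i X)

lemma uFn_eq (i : Fin (n+1)) : (uFn i : Matrix.SpecialLinearGroup (Fin (n+1)) k → k)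
    = ((-1 : k)^((i:ℕ)+n)) • ((lastColFn k n i) * (minorFn k n i)) := by
  funext X
  simp [uFn, lastColFn, Pi.smul_apply, Pi.mul_apply, smul_eq_mul]

lemma laplace : (∑ i : Fin (n+1), (uFn i : Matrix.SpecialLinearGroup (Fin (n+1)) k → k)) = 1 := by
  funext X
  rw [Finset.sum_apply]
  calc ∑ i : Fin (n+1), uFn i X
      = ∑ i : Fin (n+1), (-1 : k)^((i:ℕ)+((Fin.last n : Fin (n+1)):ℕ)) * X.1 i (Fin.last n) *
        ((X.1.submatrix i.succAbove (Fin.last n).succAbove).det) := by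
        refine Finset.sum_congr rfl fun i _ => ?_
        rw [Fin.succAbove_last, Fin.val_last]
        show (-1 : k)^((i:ℕ)+n) * (X.1 i (Fin.last n) * minorFn k n i X) = _
        show _ = _ * _ * minorFn k n i X
        ring
    _ = X.1.det := (Matrix.det_succ_column X.1 (Fin.last n)).symm
    _ = 1 := X.2

set_option maxHeartbeats 1000000 in
set_option synthInstance.maxHeartbeats 200000 in
theorem main_inclusion (φ : Matrix.SpecialLinearGroup (Fin (n+1)) k → k)
    (hreg : φ ∈ regularSL k n) (hinv : φ ∈ invSLn k n) :
    φ ∈ Algebra.adjoin k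
      (Set.range (minorFn k n) ∪ Set.range (lastColFn k n)) := by
  classical
  set A := Algebra.adjoin k
    (Set.range (minorFn k n) ∪ Set.range (lastColFn k n)) with hA
  have hmA : ∀ j, minorFn k n j ∈ A := fun j => Algebra.subset_adjoin (Or.inl ⟨j, rfl⟩)
  have hyA : ∀ j, lastColFn k n j ∈ A := fun j => Algebra.subset_adjoin (Or.inr ⟨j, rfl⟩)
  have huA : ∀ j, uFn (k:=k) (n:=n) j ∈ A := by
    intro j
    rw [uFn_eq]
    exact Subalgebra.smul_mem _ (mul_mem (hyA j) (hmA j)) _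
  choose N hN using fun i => pow_mul_mem i φ hreg hinv
  set Nm := Finset.univ.sup N with hNm
  have hNmax : ∀ i, minorFn k n i ^ Nm * φ ∈ A := by
    intro i
    have hle : N i ≤ Nm := Finset.le_sup (Finset.mem_univ i)
    have h2 : Nm = (Nm - N i) + N i := (Nat.sub_add_cancel hle).symm
    rw [h2, pow_add, mul_assoc]
    exact mul_mem (pow_mem (hmA i) _) (hN i)
  let u : Fin (n+1) → A := fun i => ⟨uFn i, huA i⟩
  let I : Ideal A := {
    carrier := {x | (x : _ → k) * φ ∈ A}
    add_mem' := by
      intro a b ha hb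
      have ha' : (a : _ → k) * φ ∈ A := ha
      have hb' : (b : _ → k) * φ ∈ A := hb
      show ((a + b : A) : _ → k) * φ ∈ A
      have h3 : ((a + b : A) : _ → k) * φ = (a : _ → k) * φ + (b : _ → k) * φ := by
        rw [Subalgebra.coe_add]; ring
      rw [h3]
      exact add_mem ha' hb'
    zero_mem' := by
      show ((0 : A) : _ → k) * φ ∈ A
      have h3 : ((0 : A) : _ → k) * φ = 0 := by rw [ZeroMemClass.coe_zero]; ring
      rw [h3]
      exact zero_mem A
    smul_mem' := by
      intro c x hx
      have hx' : (x : _ → k) * φ ∈ A := hx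
      show ((c • x : A) : _ → k) * φ ∈ A
      have h3 : ((c • x : A) : _ → k) * φ = (c : _ → k) * ((x : _ → k) * φ) := by
        rw [smul_eq_mul, MulMemClass.coe_mul]
        ring
      rw [h3]
      exact mul_mem c.2 hx' }
  have memI : ∀ x : A, x ∈ I ↔ (x : _ → k) * φ ∈ A := fun x => Iff.rfl
  have husum : (∑ i, u i) = 1 := by
    apply Subtype.ext
    rw [AddSubmonoidClass.coe_finset_sum]
    exact laplace
  have hgen : ∀ (i : Fin (n+1)) (m : ℕ), Nm ≤ m → u i ^ m ∈ I := by
    intro i m hm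
    rw [memI]
    have hcoe : ((u i ^ m : A) : _ → k) = uFn i ^ m := by
      rw [SubmonoidClass.coe_pow]
    rw [hcoe, uFn_eq, smul_pow, mul_pow]
    have hm' : m = (m - Nm) + Nm := (Nat.sub_add_cancel hm).symm
    have h4 : (((-1 : k))^((i:ℕ)+n))^m • (lastColFn k n i ^ m *
        minorFn k n i ^ m) * φ
        = (((-1 : k))^((i:ℕ)+n))^m • (lastColFn k n i ^ m *
            (minorFn k n i ^ (m - Nm) * (minorFn k n i ^ Nm * φ))) := by
      rw [smul_mul_assoc]
      congr 1
      rw [mul_assoc, ← mul_assoc (minorFn k n i ^ (m - Nm)), ← pow_add, ← hm']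
    rw [h4]
    exact Subalgebra.smul_mem _
      (mul_mem (pow_mem (hyA i) _) (mul_mem (pow_mem (hmA i) _) (hNmax i))) _
  have hone : (1 : A) ∈ I := by
    have hs := Ideal.sum_pow_mem_span_pow Finset.univ u Nm
    rw [husum, one_pow] at hs
    refine Ideal.span_le.mpr ?_ hs
    rintro x ⟨i, -, rfl⟩
    exact hgen i (Nm + 1) (Nat.le_succ_of_le le_rfl)
  have hfin : ((1 : A) : _ → k) * φ ∈ A := (memI 1).mp hone
  rwa [OneMemClass.coe_one, one_mul] at hfin


end Stmt9Aux

/-- the algebra of `SL_n`-invariant regular functions on `SL_{n+1}` (for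
the right-multiplication action) is generated by the `n+1` minors `Mᵢ` together with
the `n+1` last-column entries `yᵢ`. -/
theorem stmt9 :
    (regularSL k n ⊓ invSLn k n :
        Subalgebra k (Matrix.SpecialLinearGroup (Fin (n + 1)) k → k))
      = Algebra.adjoin k (Set.range (minorFn k n) ∪ Set.range (lastColFn k n)) := by
  apply le_antisymm
  · intro φ hφ
    obtain ⟨hreg, hinv⟩ := Algebra.mem_inf.mp hφ
    exact Stmt9Aux.main_inclusion φ hreg hinv
  · rw [Algebra.adjoin_le_iff]
    rintro f (⟨i, rfl⟩ | ⟨i, rfl⟩)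
    · exact Algebra.mem_inf.mpr ⟨Stmt9Aux.minor_mem_regular i, Stmt9Aux.minor_mem_inv i⟩
    · exact Algebra.mem_inf.mpr ⟨Stmt9Aux.lastCol_mem_regular i, Stmt9Aux.lastCol_mem_inv i⟩
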